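/- Let H be a [3]-graph, let C be a Berge cycle in H, and let u ∈ V(H) − V(C). Then there exists a set U ⊆ V(C) that is usable for u with |U| ≥ d_C(u)/6. -/

import Mathlib

/-- Two vertices are adjacent in the hypergraph with edge set `H`
if some edge contains both of them. -/
def HAdj {V : Type*} (H : Finset (Finset V)) (u v : V) : Prop :=
  u ≠ v ∧ ∃ e ∈ H, u ∈ e ∧ v ∈ e

/-- The degree of `u` in the 2-shadow `∂H`: the number of vertices adjacent to `u`. -/
noncomputable def shadowDeg {V : Type*} (H : Finset (Finset V)) (u : V) : ℕ :=
  {v | HAdj H u v}.ncard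

/-- A `[3]`-graph: every edge has exactly 2 or 3 vertices. -/
def IsThreeGraph {V : Type*} (H : Finset (Finset V)) : Prop :=
  ∀ e ∈ H, e.card = 2 ∨ e.card = 3

/-- A Berge cycle of length `t` in the hypergraph with edge set `H`:
`t` distinct vertices `vtx i` and `t` distinct edges `edge i` (indices mod `t`)
with `{vtx i, vtx (i+1)} ⊆ edge i` for every `i`. -/
structure BergeCycle {V : Type*} (H : Finset (Finset V)) (t : ℕ) where
  vtx : ZMod t → V
  edge : ZMod t → Finset V
  vtx_inj : Function.Injective vtx
  edge_inj : Function.Injective edge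
  edge_mem : ∀ i, edge i ∈ H
  mem_fst : ∀ i, vtx i ∈ edge i
  mem_snd : ∀ i, vtx (i + 1) ∈ edge i

/-- `d_C(u)`: the number of vertices of the Berge cycle `C` adjacent to `u`. -/
noncomputable def BergeCycle.dC {V : Type*} {H : Finset (Finset V)} {t : ℕ}
    (C : BergeCycle H t) (u : V) : ℕ :=
  {v | v ∈ Set.range C.vtx ∧ HAdj H u v}.ncard

/-- `H` contains a Hamiltonian Berge cycle, i.e. a Berge cycle whose
vertex set is all of `V`. -/
def HamiltonianBergeCycle {V : Type*} (H : Finset (Finset V)) : Prop :=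
  ∃ (t : ℕ) (C : BergeCycle H t), Set.range C.vtx = Set.univ

/-- A set `U` of indices of vertices of the Berge cycle `C` is usable for `u`:
(1) for every `i ∈ U` there is an edge in `E(u, v_{i-1}) - {e_{i-2}}`;
(2) any two distinct `i, j ∈ U` are non-consecutive on `C`;
(3) for every pair of distinct `i, j ∈ U` there are distinct edges
`e ∈ E(u, v_{i-1}) - {e_{i-2}}` and `e' ∈ E(u, v_{j-1}) - {e_{j-2}}`. -/
def Usable {V : Type*} {H : Finset (Finset V)} {t : ℕ} (C : BergeCycle H t) (u : V)
    (U : Set (ZMod t)) : Prop :=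
  (∀ i ∈ U, ∃ e ∈ H, e ≠ C.edge (i - 2) ∧ u ∈ e ∧ C.vtx (i - 1) ∈ e) ∧
  (∀ i ∈ U, ∀ j ∈ U, i ≠ j → j ≠ i + 1 ∧ j ≠ i - 1) ∧
  (∀ i ∈ U, ∀ j ∈ U, i ≠ j → ∃ e ∈ H, ∃ e' ∈ H, e ≠ e' ∧
    e ≠ C.edge (i - 2) ∧ u ∈ e ∧ C.vtx (i - 1) ∈ e ∧
    e' ≠ C.edge (j - 2) ∧ u ∈ e' ∧ C.vtx (j - 1) ∈ e')

/-- `CwBtw a b c` : on the cycle oriented clockwise, `b` lies strictly between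
`a` and `c` on the clockwise arc from `a` to `c`. -/
def CwBtw {t : ℕ} (a b c : ZMod t) : Prop :=
  0 < (b - a).val ∧ (b - a).val < (c - a).val

/-- `e` is an `(i,j;k)`-bridge of the Berge cycle `C`. -/
def IsBridge {V : Type*} [DecidableEq V] {H : Finset (Finset V)} {t : ℕ}
    (C : BergeCycle H t) (i j k : ZMod t) (e : Finset V) : Prop :=
  (CwBtw i k j ∧ ((e = C.edge (k + 1) ∧ e = {C.vtx i, C.vtx (k + 1), C.vtx (k + 2)}) ∨
                (e = C.edge (k - 1) ∧ e = {C.vtx j, C.vtx k, C.vtx (k - 1)}))) ∨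
  (CwBtw j k i ∧ ((e = C.edge (k - 1) ∧ e = {C.vtx i, C.vtx k, C.vtx (k - 1)}) ∨
                (e = C.edge (k + 1) ∧ e = {C.vtx j, C.vtx (k + 1), C.vtx (k + 2)})))

/-- `R(v_i, v_j)`: the set of bridges produced by the pair `{v_i, v_j}`,
i.e. all `(i,j;k)`-bridges over `k ∉ {i, j}`. -/
def RBridges {V : Type*} [DecidableEq V] {H : Finset (Finset V)} {t : ℕ}
    (C : BergeCycle H t) (i j : ZMod t) : Set (Finset V) :=
  {e | ∃ k : ZMod t, k ≠ i ∧ k ≠ j ∧ IsBridge C i j k e}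

open Finset in

lemma key_lemma {t : ℕ} [NeZero t] (h1 : (1 : ZMod t) ≠ 0)
    (R : ZMod t → ZMod t → Prop) (hsymm : ∀ a b, R a b → R b a) :
    ∀ (n : ℕ) (X : Finset (ZMod t)), X.card = n →
      (∀ v ∈ X, ∀ w ∈ X, ∀ w' ∈ X, R v w → R v w' → w = w') →
      ∃ S : Finset (ZMod t), S ⊆ X ∧
        (∀ i ∈ S, ∀ j ∈ S, i ≠ j → j ≠ i + 1 ∧ j ≠ i - 1 ∧ ¬ R i j) ∧
        2 * X.card ≤ 6 * S.card + (X.filter (fun i => i + 1 ∈ X)).card := by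
  intro n
  induction n using Nat.strong_induction_on with
  | _ n ih =>
    intro X hcard hmatch
    classical
    rcases X.eq_empty_or_nonempty with rfl | ⟨v, hv⟩
    · exact ⟨∅, by simp⟩
    set D := X.filter (fun w => w = v ∨ w = v + 1 ∨ w = v - 1 ∨ R v w) with hD
    set X' := X \ D with hX'
    have hDX : D ⊆ X := filter_subset _ _
    have hvD : v ∈ D := by simp [hD, hv]
    have hX'X : X' ⊆ X := sdiff_subset
    have hcardsum : X'.card + D.card = X.card := card_sdiff_add_card_eq_card hDX
    have hlt : X'.card < n := by
      have : 0 < D.card := card_pos.mpr ⟨v, hvD⟩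
      omega
    obtain ⟨S', hS'sub, hS'ind, hS'cnt⟩ := ih X'.card hlt X' rfl
      (fun a ha b hb c hc => hmatch a (hX'X ha) b (hX'X hb) c (hX'X hc))
    have hvnotS' : v ∉ S' := fun h => by
      have := hS'sub h
      rw [hX', mem_sdiff] at this
      exact this.2 hvD
    -- facts about membership in X'
    have hnotv : ∀ j ∈ X', j ≠ v := by
      intro j hj hjv
      rw [hX', mem_sdiff] at hj
      exact hj.2 (mem_filter.mpr ⟨hj.1, Or.inl hjv⟩)
    have hnotv1 : ∀ j ∈ X', j ≠ v + 1 := by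
      intro j hj hjv
      rw [hX', mem_sdiff] at hj
      exact hj.2 (mem_filter.mpr ⟨hj.1, Or.inr (Or.inl hjv)⟩)
    have hnotvm1 : ∀ j ∈ X', j ≠ v - 1 := by
      intro j hj hjv
      rw [hX', mem_sdiff] at hj
      exact hj.2 (mem_filter.mpr ⟨hj.1, Or.inr (Or.inr (Or.inl hjv))⟩)
    have hnotR : ∀ j ∈ X', ¬ R v j := by
      intro j hj hjR
      rw [hX', mem_sdiff] at hj
      exact hj.2 (mem_filter.mpr ⟨hj.1, Or.inr (Or.inr (Or.inr hjR))⟩)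
    refine ⟨insert v S', ?_, ?_, ?_⟩
    · intro x hx
      rcases mem_insert.mp hx with rfl | hx
      · exact hv
      · exact hX'X (hS'sub hx)
    · intro i hi j hj hij
      rcases mem_insert.mp hi with hiv | hi
      · subst hiv
        rcases mem_insert.mp hj with hjv | hj
        · exact absurd hjv hij.symm
        · exact ⟨hnotv1 j (hS'sub hj), hnotvm1 j (hS'sub hj), hnotR j (hS'sub hj)⟩
      · rcases mem_insert.mp hj with hjv | hj
        · have hiX' : i ∈ X' := hS'sub hi
          refine ⟨?_, ?_, ?_⟩
          · intro h
            exact hnotvm1 i hiX' (by rw [hjv] at h; rw [h]; ring)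
          · intro h
            exact hnotv1 i hiX' (by rw [hjv] at h; rw [h]; ring)
          · intro h
            rw [hjv] at h
            exact hnotR i hiX' (hsymm _ _ h)
        · exact hS'ind i hi j hj hij
    · -- counting
      have hcardins : (insert v S').card = S'.card + 1 := card_insert_of_notMem hvnotS'
      -- p monotone
      have hpmono : (X'.filter (fun i => i + 1 ∈ X')).card ≤ (X.filter (fun i => i + 1 ∈ X)).card := by
        apply card_le_card
        intro x hx
        simp only [mem_filter] at hx ⊢
        exact ⟨hX'X hx.1, hX'X hx.2⟩
      -- bound on D
      set M := X.filter (fun w => R v w) with hM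
      have hMcard : M.card ≤ 1 := by
        apply card_le_one.mpr
        intro a ha b hb
        rw [hM, mem_filter] at ha hb
        exact hmatch v hv a ha.1 b hb.1 ha.2 hb.2
      have hDsub : D ⊆ insert v (insert (v+1) (insert (v-1) M)) := by
        intro x hx
        rw [hD, mem_filter] at hx
        rcases hx.2 with h | h | h | h
        · simp [h]
        · simp [h]
        · simp [h]
        · simp [hM, mem_filter, hx.1, h]
      have hDcard4 : D.card ≤ 4 := by
        calc D.card ≤ (insert v (insert (v+1) (insert (v-1) M))).card := card_le_card hDsub
        _ ≤ (insert (v+1) (insert (v-1) M)).card + 1 := card_insert_le _ _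
        _ ≤ (insert (v-1) M).card + 1 + 1 := by have := card_insert_le (v+1) (insert (v-1) M); omega
        _ ≤ M.card + 1 + 1 + 1 := by have := card_insert_le (v-1) M; omega
        _ ≤ 4 := by omega
      by_cases hD3 : D.card ≤ 3
      · omega
      · -- D.card = 4
        have hDcard : D.card = 4 := by omega
        have hT : D = insert v (insert (v+1) (insert (v-1) M)) := by
          apply eq_of_subset_of_card_le hDsub
          calc (insert v (insert (v+1) (insert (v-1) M))).card
              ≤ M.card + 3 := by
                have h1' := card_insert_le v (insert (v+1) (insert (v-1) M))
                have h2' := card_insert_le (v+1) (insert (v-1) M)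
                have h3' := card_insert_le (v-1) M
                omega
            _ ≤ 4 := by omega
            _ = D.card := hDcard.symm
        have hv1X : v + 1 ∈ X := hDX (by rw [hT]; simp)
        have hvm1X : v - 1 ∈ X := hDX (by rw [hT]; simp)
        have hvne : v ≠ v - 1 := by
          intro h
          apply h1
          have hx : v - (v - 1) = 1 := by ring
          rw [← hx]
          nth_rewrite 1 [h]
          rw [sub_self]
        -- v and v-1 are in the filter of X but not X'
        have hvf : v ∈ X.filter (fun i => i + 1 ∈ X) := by simp [hv, hv1X]
        have hvm1f : v - 1 ∈ X.filter (fun i => i + 1 ∈ X) := by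
          simp only [mem_filter]
          constructor
          · exact hvm1X
          · rw [sub_add_cancel]; exact hv
        have hsubpair : ({v, v - 1} : Finset (ZMod t)) ⊆ X.filter (fun i => i + 1 ∈ X) := by
          intro x hx
          rcases mem_insert.mp hx with rfl | hx
          · exact hvf
          · rw [mem_singleton] at hx; exact hx ▸ hvm1f
        have hfsub : X'.filter (fun i => i + 1 ∈ X') ⊆ (X.filter (fun i => i + 1 ∈ X)) \ {v, v - 1} := by
          intro x hx
          rw [mem_sdiff]
          simp only [mem_filter] at hx
          constructor
          · simp only [mem_filter]
            exact ⟨hX'X hx.1, hX'X hx.2⟩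
          · simp only [mem_insert, mem_singleton]
            push_neg
            exact ⟨hnotv x hx.1, hnotvm1 x hx.1⟩
        have hpaircard : ({v, v - 1} : Finset (ZMod t)).card = 2 := by
          rw [card_insert_of_notMem (by simp [hvne]), card_singleton]
        have hp2 : (X'.filter (fun i => i + 1 ∈ X')).card + 2 ≤ (X.filter (fun i => i + 1 ∈ X)).card := by
          have := card_le_card hfsub
          rw [card_sdiff_of_subset hsubpair, hpaircard] at this
          have hle := card_le_card hsubpair
          omega
        omega

set_option maxHeartbeats 2000000 in
theorem stmt5 {V : Type*} [Fintype V] (H : Finset (Finset V)) (h3 : IsThreeGraph H)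
    {t : ℕ} (ht : 3 ≤ t) (C : BergeCycle H t)
    (u : V) (hu : u ∉ Set.range C.vtx) :
    ∃ U : Set (ZMod t), Usable C u U ∧ (C.dC u : ℚ) / 6 ≤ U.ncard := by
  classical
  haveI : NeZero t := ⟨by omega⟩
  have h1 : (1 : ZMod t) ≠ 0 := by
    haveI : Fact (1 < t) := ⟨by omega⟩
    exact one_ne_zero
  have hune : ∀ i : ZMod t, u ≠ C.vtx i := fun i h => hu ⟨i, h.symm⟩
  have hvne : ∀ i j : ZMod t, i ≠ j → C.vtx i ≠ C.vtx j :=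
    fun i j hij h => hij (C.vtx_inj h)
  set A : Finset (ZMod t) := Finset.univ.filter (fun i => HAdj H u (C.vtx i)) with hA
  have hdC : C.dC u = A.card := by
    have h2 : {x : V | x ∈ Set.range C.vtx ∧ HAdj H u x}
        = C.vtx '' {i | HAdj H u (C.vtx i)} := by
      ext x
      constructor
      · rintro ⟨⟨i, rfl⟩, hadj⟩
        exact ⟨i, hadj, rfl⟩
      · rintro ⟨i, hadj, rfl⟩
        exact ⟨⟨i, rfl⟩, hadj⟩
    have h3' : {i : ZMod t | HAdj H u (C.vtx i)} = ↑A := by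
      ext i; simp [hA]
    rw [BergeCycle.dC, h2, Set.ncard_image_of_injective _ C.vtx_inj, h3',
      Set.ncard_coe_finset]
  set good : ZMod t → Prop :=
    fun i => ∃ e ∈ H, e ≠ C.edge (i - 1) ∧ u ∈ e ∧ C.vtx i ∈ e with hgood
  set A' : Finset (ZMod t) := A.filter good with hA'
  have hL1 : ∀ i ∈ A, ¬ good i → (i - 1) ∈ A' := by
    intro i hiA hbad
    rw [hA, Finset.mem_filter] at hiA
    obtain ⟨-, hne, e, heH, hue, hve⟩ := hiA
    have he : e = C.edge (i - 1) := by
      by_contra hne'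
      exact hbad ⟨e, heH, hne', hue, hve⟩
    have huE : u ∈ C.edge (i - 1) := he ▸ hue
    have hgoodm : good (i - 1) := by
      refine ⟨C.edge (i - 1), C.edge_mem _, ?_, huE, C.mem_fst (i - 1)⟩
      intro hEq
      have h0 := C.edge_inj hEq
      exact h1 (by linear_combination h0)
    rw [hA', Finset.mem_filter, hA, Finset.mem_filter]
    exact ⟨⟨Finset.mem_univ _,
      ⟨hune _, C.edge (i - 1), C.edge_mem _, huE, C.mem_fst _⟩⟩, hgoodm⟩
  set Rc : ZMod t → ZMod t → Prop := fun i j => i ≠ j ∧ ∀ e ∈ H, ∀ e' ∈ H,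
      (e ≠ C.edge (i - 1) ∧ u ∈ e ∧ C.vtx i ∈ e) →
      (e' ≠ C.edge (j - 1) ∧ u ∈ e' ∧ C.vtx j ∈ e') → e = e' with hRc
  have hsymm : ∀ a b, Rc a b → Rc b a := by
    rintro a b ⟨hne, h⟩
    exact ⟨hne.symm, fun e he e' he' hb ha => (h e' he' e he ha hb).symm⟩
  have hmatch : ∀ v ∈ A', ∀ w ∈ A', ∀ w' ∈ A', Rc v w → Rc v w' → w = w' := by
    intro a ha b hb c hc hab hac
    by_contra hbc
    rw [hA', Finset.mem_filter] at ha hb hc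
    obtain ⟨e, heH, hee, hue, hva⟩ := ha.2
    obtain ⟨f, hfH, hfe, huf, hvb⟩ := hb.2
    obtain ⟨g, hgH, hge, hug, hvc⟩ := hc.2
    have hef : e = f := hab.2 e heH f hfH ⟨hee, hue, hva⟩ ⟨hfe, huf, hvb⟩
    have heg : e = g := hac.2 e heH g hgH ⟨hee, hue, hva⟩ ⟨hge, hug, hvc⟩
    have hab' : C.vtx a ≠ C.vtx b := hvne _ _ hab.1
    have hac' : C.vtx a ≠ C.vtx c := hvne _ _ hac.1
    have hbc' : C.vtx b ≠ C.vtx c := hvne _ _ hbc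
    have hsub : ({u, C.vtx a, C.vtx b, C.vtx c} : Finset V) ⊆ e := by
      intro x hx
      simp only [Finset.mem_insert, Finset.mem_singleton] at hx
      rcases hx with rfl | rfl | rfl | rfl
      · exact hue
      · exact hva
      · rw [hef]; exact hvb
      · rw [heg]; exact hvc
    have c3 : ({C.vtx a, C.vtx b, C.vtx c} : Finset V).card = 3 := by
      rw [Finset.card_insert_of_notMem (by simp [hab', hac']),
        Finset.card_insert_of_notMem (by simp [hbc']), Finset.card_singleton]
    have c4 : ({u, C.vtx a, C.vtx b, C.vtx c} : Finset V).card = 4 := by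
      rw [Finset.card_insert_of_notMem (by simp [hune a, hune b, hune c]), c3]
    have hle := Finset.card_le_card hsub
    rw [c4] at hle
    rcases h3 e heH with h | h <;> omega
  obtain ⟨S, hSsub, hSind, hScnt⟩ := key_lemma h1 Rc hsymm A'.card A' rfl hmatch
  -- counting
  set B : Finset (ZMod t) := A.filter (fun i => ¬ good i) with hB
  have hAsplit : A'.card + B.card = A.card := by
    have h := Finset.card_filter_add_card_filter_not (s := A) (p := good)
    simpa [hA', hB] using h
  have hBinj : B.card ≤ (A'.filter (fun i => i + 1 ∉ A')).card := by
    apply Finset.card_le_card_of_injOn (fun i => i - 1)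
    · intro i hi
      simp only [Finset.mem_coe, hB, Finset.mem_filter] at hi
      have him : i - 1 ∈ A' := hL1 i hi.1 hi.2
      simp only [Finset.mem_coe, Finset.mem_filter]
      refine ⟨him, ?_⟩
      rw [sub_add_cancel]
      intro hmem
      rw [hA', Finset.mem_filter] at hmem
      exact hi.2 hmem.2
    · intro a _ b _ h
      simp only at h
      have : a - 1 + 1 = b - 1 + 1 := by rw [h]
      simpa [sub_add_cancel] using this
  have hfsplit : (A'.filter (fun i => i + 1 ∈ A')).card
      + (A'.filter (fun i => i + 1 ∉ A')).card = A'.card := by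
    have h := Finset.card_filter_add_card_filter_not (s := A') (p := fun i => i + 1 ∈ A')
    simpa using h
  have hd6 : A.card ≤ 6 * S.card := by omega
  -- build U
  refine ⟨↑(S.image (fun i => i + 1)), ⟨?_, ?_, ?_⟩, ?_⟩
  · intro j hj
    rw [Finset.coe_image] at hj
    obtain ⟨i, hiS, rfl⟩ := hj
    have hiA' := hSsub hiS
    rw [hA', Finset.mem_filter] at hiA'
    obtain ⟨e, heH, hee, hue, hvi⟩ := hiA'.2
    have e1 : (i + 1 - 2 : ZMod t) = i - 1 := by ring
    have e2 : (i + 1 - 1 : ZMod t) = i := by ring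
    rw [e1, e2]
    exact ⟨e, heH, hee, hue, hvi⟩
  · intro a ha b hb hab
    rw [Finset.coe_image] at ha hb
    obtain ⟨i, hiS, rfl⟩ := ha
    obtain ⟨i', hi'S, rfl⟩ := hb
    have hne : i ≠ i' := fun h => hab (by rw [h])
    obtain ⟨hn1, hn2, -⟩ := hSind i hiS i' hi'S hne
    constructor
    · intro h
      exact hn1 (by linear_combination h)
    · intro h
      exact hn2 (by linear_combination h)
  · intro a ha b hb hab
    rw [Finset.coe_image] at ha hb
    obtain ⟨i, hiS, rfl⟩ := ha
    obtain ⟨i', hi'S, rfl⟩ := hb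
    have hne : i ≠ i' := fun h => hab (by rw [h])
    obtain ⟨-, -, hnR⟩ := hSind i hiS i' hi'S hne
    simp only [hRc] at hnR
    push_neg at hnR
    obtain ⟨e, heH, e', he'H, hcond, hcond', hne'⟩ := hnR hne
    have e1 : (i + 1 - 2 : ZMod t) = i - 1 := by ring
    have e2 : (i + 1 - 1 : ZMod t) = i := by ring
    have e3 : (i' + 1 - 2 : ZMod t) = i' - 1 := by ring
    have e4 : (i' + 1 - 1 : ZMod t) = i' := by ring
    rw [e1, e2, e3, e4]
    exact ⟨e, heH, e', he'H, hne', hcond.1, hcond.2.1, hcond.2.2,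
      hcond'.1, hcond'.2.1, hcond'.2.2⟩
  · rw [Set.ncard_coe_finset, Finset.card_image_of_injective _ (add_left_injective 1),
      hdC, div_le_iff₀ (by norm_num : (0:ℚ) < 6)]
    have : (A.card : ℚ) ≤ 6 * S.card := by exact_mod_cast hd6
    linarith
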